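/- Let μ = (μ₁, μ₂, μ₃) ∈ ℝ³, let M(v) = (μ₁v₁, μ₂v₂, μ₃v₃), and let σ ∈ ℝ³ be nonzero. Then M(M(σ)) × M(σ) = 0 if and only if at least one of the following holds: (a) σ is an eigenvector of M (there exists c ∈ ℝ with μ_iσ_i = cσ_i for i = 1,2,3); (b) at least two of μ₁, μ₂, μ₃ are zero; (c) there exist an index k with μ_k = 0 and a nonzero eigenvector w of M such that σ lies in the linear span of e_k and w. -/

import Mathlib

open Matrix

/-- The Milnor map: `M(v) = (μ₁v₁, μ₂v₂, μ₃v₃)`. -/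
def milnorMap (μ v : Fin 3 → ℝ) : Fin 3 → ℝ := fun i => μ i * v i

lemma fin3_mk_two (h : 2 < 3) : (⟨2, h⟩ : Fin 3) = 2 := rfl

lemma cross_zero_iff (μ σ : Fin 3 → ℝ) :
    milnorMap μ (milnorMap μ σ) ⨯₃ milnorMap μ σ = 0 ↔
      ∀ j k : Fin 3, μ j * μ k * σ j * σ k * (μ j - μ k) = 0 := by
  constructor
  · intro h j k
    have h0 := congrFun h 0
    have h1 := congrFun h 1
    have h2 := congrFun h 2
    simp only [milnorMap, cross_apply, Matrix.cons_val_zero, Matrix.cons_val_one,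
      Matrix.head_cons, Matrix.cons_val_two, Matrix.tail_cons, Pi.zero_apply] at h0 h1 h2
    fin_cases j <;> fin_cases k <;>
      simp only [Fin.mk_zero, Fin.mk_one, fin3_mk_two] <;>
      first
        | ring1
        | linear_combination h0
        | linear_combination -h0
        | linear_combination h1
        | linear_combination -h1
        | linear_combination h2
        | linear_combination -h2
  · intro h
    funext i
    fin_cases i <;>
      simp only [Fin.mk_zero, Fin.mk_one, fin3_mk_two, milnorMap, cross_apply,
        Matrix.cons_val_zero, Matrix.cons_val_one,
        Matrix.head_cons, Matrix.cons_val_two, Matrix.tail_cons, Pi.zero_apply] <;>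
      first
        | linear_combination h 1 2
        | linear_combination h 2 0
        | linear_combination h 0 1

/-- For nonzero `σ`, `M²(σ) × M(σ) = 0` iff (a) `σ` is an eigenvector of `M`, or
(b) at least two of the `μᵢ` vanish, or (c) there are an index `k` with `μ_k = 0` and a
nonzero eigenvector `w` of `M` such that `σ` lies in the span of `e_k` and `w`. -/
theorem div_newton_eq_zero_iff (μ σ : Fin 3 → ℝ) (hσ : σ ≠ 0) :
    milnorMap μ (milnorMap μ σ) ⨯₃ milnorMap μ σ = 0 ↔
      ((∃ c : ℝ, ∀ i, μ i * σ i = c * σ i) ∨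
       (∃ i j : Fin 3, i ≠ j ∧ μ i = 0 ∧ μ j = 0) ∨
       (∃ (k : Fin 3) (w : Fin 3 → ℝ) (c : ℝ), μ k = 0 ∧ w ≠ 0 ∧
          milnorMap μ w = c • w ∧
          ∃ a b : ℝ, σ = a • (Pi.single k 1 : Fin 3 → ℝ) + b • w)) := by
  rw [cross_zero_iff]
  constructor
  · intro H
    have heq : ∀ j k : Fin 3, μ j ≠ 0 → μ k ≠ 0 → σ j ≠ 0 → σ k ≠ 0 → μ j = μ k := by
      intro j k hj hk hsj hsk
      have h := H j k
      have hsub : μ j - μ k = 0 := by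
        by_contra hne
        exact (mul_ne_zero (mul_ne_zero (mul_ne_zero (mul_ne_zero hj hk) hsj) hsk) hne) h
      linarith
    by_cases hb : ∃ i j : Fin 3, i ≠ j ∧ μ i = 0 ∧ μ j = 0
    · exact Or.inr (Or.inl hb)
    · push_neg at hb
      by_cases hk : ∃ k : Fin 3, μ k = 0 ∧ σ k ≠ 0
      · obtain ⟨k, hμk, hσk⟩ := hk
        set w : Fin 3 → ℝ := fun i => if i = k then 0 else σ i with hwdef
        by_cases hw : w = 0
        · refine Or.inl ⟨0, fun i => ?_⟩
          by_cases hik : i = k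
          · subst hik; rw [hμk]
          · have hsi : σ i = 0 := by simpa [hwdef, hik] using congrFun hw i
            rw [hsi]; ring
        · refine Or.inr (Or.inr ?_)
          obtain ⟨i₀, hi₀⟩ : ∃ i, w i ≠ 0 := by
            by_contra hc; push_neg at hc; exact hw (funext hc)
          have hi₀k : i₀ ≠ k := by
            intro e; apply hi₀; simp [hwdef, e]
          have hσi₀ : σ i₀ ≠ 0 := by simpa [hwdef, hi₀k] using hi₀
          refine ⟨k, w, μ i₀, hμk, hw, ?_, σ k, 1, ?_⟩
          · funext i
            show μ i * w i = μ i₀ * w i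
            by_cases hik : i = k
            · simp [hwdef, hik]
            · by_cases hsi : σ i = 0
              · simp [hwdef, hik, hsi]
              · by_cases hii : i = i₀
                · rw [hii]
                · have hμi : μ i ≠ 0 := hb k i (Ne.symm hik) hμk
                  have hμi₀ : μ i₀ ≠ 0 := hb k i₀ (Ne.symm hi₀k) hμk
                  rw [heq i i₀ hμi hμi₀ hsi hσi₀]
          · funext i
            by_cases hik : i = k
            · subst hik; simp [hwdef]
            · simp [hwdef, hik, Pi.single_eq_of_ne hik]
      · push_neg at hk
        obtain ⟨i₀, hi₀⟩ : ∃ i, σ i ≠ 0 := by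
          by_contra hc; push_neg at hc; exact hσ (funext hc)
        refine Or.inl ⟨μ i₀, fun i => ?_⟩
        by_cases hsi : σ i = 0
        · rw [hsi]; ring
        · by_cases hii : i = i₀
          · rw [hii]
          · have hμi : μ i ≠ 0 := fun e => hsi (hk i e)
            have hμi₀ : μ i₀ ≠ 0 := fun e => hi₀ (hk i₀ e)
            rw [heq i i₀ hμi hμi₀ hsi hi₀]
  · rintro (⟨c, hc⟩ | ⟨i, j, hij, h1, h2⟩ | ⟨k, w, c, hμk, hw, hwc, a, b, hab⟩) <;> intro p q
    · by_cases hp : σ p = 0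
      · rw [hp]; ring
      by_cases hq : σ q = 0
      · rw [hq]; ring
      have hcp : μ p = c := mul_right_cancel₀ hp (hc p)
      have hcq : μ q = c := mul_right_cancel₀ hq (hc q)
      rw [hcp, hcq]; ring
    · have key3 : ∀ (i j p q : Fin 3), i ≠ j → p = i ∨ p = j ∨ q = i ∨ q = j ∨ p = q := by
        decide
      rcases key3 i j p q hij with e | e | e | e | e
      · rw [e, h1]; ring
      · rw [e, h2]; ring
      · rw [e, h1]; ring
      · rw [e, h2]; ring
      · rw [e]; ring
    · have hwi : ∀ i, μ i * w i = c * w i := by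
        intro i
        have := congrFun hwc i
        simpa [milnorMap] using this
      by_cases hpk : p = k
      · rw [hpk, hμk]; ring
      by_cases hqk : q = k
      · rw [hqk, hμk]; ring
      have hsp : σ p = b * w p := by
        simpa [Pi.single_eq_of_ne hpk] using congrFun hab p
      have hsq : σ q = b * w q := by
        simpa [Pi.single_eq_of_ne hqk] using congrFun hab q
      by_cases hwp : w p = 0
      · rw [hsp, hwp]; ring
      by_cases hwq : w q = 0
      · rw [hsq, hwq]; ring
      have e1 : μ p = c := mul_right_cancel₀ hwp (hwi p)
      have e2 : μ q = c := mul_right_cancel₀ hwq (hwi q)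
      rw [e1, e2]; ring
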